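/- For every fixed α > 1, the Rényi entropy H_α is continuous on the set of probability distributions over the positive integers with respect to the total variation distance: if d_TV(P_n, P) → 0, then H_α(P_n) → H_α(P). -/
import Mathlib


open Filter Topology
open scoped ENNReal

/-- A probability distribution over the positive integers (indexed by `ℕ`):
nonnegative masses summing to `1`. -/
def IsProbDist (p : ℕ → ℝ) : Prop :=
  (∀ n, 0 ≤ p n) ∧ HasSum p 1

/-- The sum `∑ pₙ^α`, computed in `[0,∞]`, with the convention `0^0 = 0`. -/
noncomputable def renyiSum (p : ℕ → ℝ) (α : ℝ) : ℝ≥0∞ :=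
  ∑' n, if p n = 0 then 0 else ENNReal.ofReal (p n ^ α)

/-- The Shannon entropy `H₁(P) = -∑ pₙ log pₙ`, valued in `[0,∞]`. -/
noncomputable def shannonEntropy (p : ℕ → ℝ) : ℝ≥0∞ :=
  ∑' n, ENNReal.ofReal (-(p n * Real.log (p n)))

/-- The Rényi entropy `H_α(P)`, valued in `[0,∞]`: for `α ≠ 1` it is
`(1/(1-α)) log ∑ pₙ^α` (equal to `∞` when the sum diverges), and for `α = 1`
it is the Shannon entropy. -/
noncomputable def renyiEntropy (p : ℕ → ℝ) (α : ℝ) : ℝ≥0∞ :=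
  if α = 1 then shannonEntropy p
  else if renyiSum p α = ∞ then ∞
  else ENNReal.ofReal ((1 - α)⁻¹ * Real.log (renyiSum p α).toReal)

/-- The region of convergence `R(P) = {α ≥ 0 : H_α(P) < ∞}`. -/
def convRegion (p : ℕ → ℝ) : Set ℝ :=
  {α : ℝ | 0 ≤ α ∧ renyiEntropy p α < ∞}

/-- The critical exponent `α_c(P) = inf {α ≥ 0 : H_α(P) < ∞}`. -/
noncomputable def criticalExponent (p : ℕ → ℝ) : ℝ :=
  sInf (convRegion p)

/-- The total variation distance `d_TV(P,Q) = ∑ |pₙ - qₙ|`. -/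
noncomputable def dTV (p q : ℕ → ℝ) : ℝ :=
  ∑' n, |p n - q n|

lemma lip_rpow {α : ℝ} (hα : 1 ≤ α) {a b : ℝ} (ha : a ∈ Set.Icc (0:ℝ) 1)
    (hb : b ∈ Set.Icc (0:ℝ) 1) : |a ^ α - b ^ α| ≤ α * |a - b| := by
  have hd : ∀ x ∈ Set.Icc (0:ℝ) 1, HasDerivWithinAt (fun x : ℝ => x ^ α)
      (α * x ^ (α - 1)) (Set.Icc 0 1) x := fun x hx =>
    (Real.hasDerivAt_rpow_const (Or.inr hα)).hasDerivWithinAt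
  have hbound : ∀ x ∈ Set.Icc (0:ℝ) 1, ‖α * x ^ (α - 1)‖ ≤ α := by
    intro x hx
    rw [Real.norm_eq_abs, abs_mul, abs_of_nonneg (by linarith : (0:ℝ) ≤ α),
      abs_of_nonneg (Real.rpow_nonneg hx.1 _)]
    nlinarith [Real.rpow_le_one hx.1 hx.2 (by linarith : (0:ℝ) ≤ α - 1)]
  have := Convex.norm_image_sub_le_of_norm_hasDerivWithin_le hd hbound
    (convex_Icc (0:ℝ) 1) hb ha
  simpa [Real.norm_eq_abs] using this

lemma prob_le_one {p : ℕ → ℝ} (hp : IsProbDist p) (n : ℕ) : p n ≤ 1 :=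
  le_hasSum hp.2 n (fun i _ => hp.1 i)

lemma rpow_summable {p : ℕ → ℝ} (hp : IsProbDist p) {α : ℝ} (hα : 1 ≤ α) :
    Summable (fun n => p n ^ α) := by
  refine Summable.of_nonneg_of_le (fun n => Real.rpow_nonneg (hp.1 n) _) (fun n => ?_)
    hp.2.summable
  rcases eq_or_lt_of_le (hp.1 n) with h | h
  · simp [← h, Real.zero_rpow (by linarith : α ≠ 0)]
  · calc p n ^ α ≤ p n ^ (1:ℝ) :=
        Real.rpow_le_rpow_of_exponent_ge h (prob_le_one hp n) hα
      _ = p n := Real.rpow_one _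

lemma renyiSum_eq {p : ℕ → ℝ} (hp : IsProbDist p) {α : ℝ} (hα : 1 ≤ α) :
    renyiSum p α = ENNReal.ofReal (∑' n, p n ^ α) := by
  rw [renyiSum, ENNReal.ofReal_tsum_of_nonneg (fun n => Real.rpow_nonneg (hp.1 n) _)
    (rpow_summable hp hα)]
  refine tsum_congr fun n => ?_
  split_ifs with h
  · simp [h, Real.zero_rpow (by linarith : α ≠ 0)]
  · rfl

lemma renyiEntropy_eq {p : ℕ → ℝ} (hp : IsProbDist p) {α : ℝ} (hα : 1 < α) :
    renyiEntropy p α = ENNReal.ofReal ((1 - α)⁻¹ * Real.log (∑' n, p n ^ α)) := by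
  have hS : 0 ≤ ∑' n, p n ^ α := tsum_nonneg fun n => Real.rpow_nonneg (hp.1 n) _
  rw [renyiEntropy, if_neg (by linarith : α ≠ 1), renyiSum_eq hp hα.le,
    if_neg ENNReal.ofReal_ne_top, ENNReal.toReal_ofReal hS]

set_option maxHeartbeats 1000000 in
/-- For every fixed `α > 1`, the Rényi entropy `H_α` is
continuous with respect to the total variation distance: if `d_TV(Pₙ,P) → 0`
then `H_α(Pₙ) → H_α(P)`. -/
theorem stmt13 (α : ℝ) (hα : 1 < α) (P : ℕ → ℕ → ℝ) (p : ℕ → ℝ)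
    (hP : ∀ n, IsProbDist (P n)) (hp : IsProbDist p)
    (hconv : Tendsto (fun n => dTV (P n) p) atTop (𝓝 0)) :
    Tendsto (fun n => renyiEntropy (P n) α) atTop (𝓝 (renyiEntropy p α)) := by
  have hmem : ∀ {q : ℕ → ℝ}, IsProbDist q → ∀ k, q k ∈ Set.Icc (0:ℝ) 1 :=
    fun hq k => ⟨hq.1 k, prob_le_one hq k⟩
  have habs : ∀ n, Summable (fun k => |P n k - p k|) := by
    intro n
    refine Summable.of_nonneg_of_le (fun k => abs_nonneg _) (fun k => ?_)
      (((hP n).2.summable).add hp.2.summable)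
    calc |P n k - p k| ≤ |P n k| + |p k| := abs_sub _ _
      _ = P n k + p k := by rw [abs_of_nonneg ((hP n).1 k), abs_of_nonneg (hp.1 k)]
  have hbound : ∀ n, |(∑' k, P n k ^ α) - ∑' k, p k ^ α| ≤ α * dTV (P n) p := by
    intro n
    have hsum1 := rpow_summable (hP n) hα.le
    have hsum2 := rpow_summable hp hα.le
    have hdiff : Summable (fun k => P n k ^ α - p k ^ α) := hsum1.sub hsum2
    rw [← Summable.tsum_sub hsum1 hsum2]
    have hn : ‖∑' k, (P n k ^ α - p k ^ α)‖ ≤ ∑' k, ‖P n k ^ α - p k ^ α‖ :=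
      norm_tsum_le_tsum_norm (f := fun k => P n k ^ α - p k ^ α)
        (by simpa only [Real.norm_eq_abs] using hdiff.abs)
    simp only [Real.norm_eq_abs] at hn
    calc |∑' k, (P n k ^ α - p k ^ α)| ≤ ∑' k, |P n k ^ α - p k ^ α| := hn
      _ ≤ ∑' k, α * |P n k - p k| :=
          Summable.tsum_le_tsum (fun k => lip_rpow hα.le (hmem (hP n) k) (hmem hp k))
            hdiff.abs ((habs n).mul_left α)
      _ = α * dTV (P n) p := by rw [tsum_mul_left]; rfl
  have hStend : Tendsto (fun n => ∑' k, P n k ^ α) atTop (𝓝 (∑' k, p k ^ α)) := by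
    rw [tendsto_iff_dist_tendsto_zero]
    have hg : Tendsto (fun n => α * dTV (P n) p) atTop (𝓝 0) := by
      have := hconv.const_mul α
      simpa using this
    exact squeeze_zero (fun n => dist_nonneg)
      (fun n => by rw [Real.dist_eq]; exact hbound n) hg
  have hSpos : 0 < ∑' k, p k ^ α := by
    obtain ⟨k, hk⟩ : ∃ k, 0 < p k := by
      by_contra h
      push_neg at h
      have hz : p = fun _ => 0 := funext fun k => le_antisymm (h k) (hp.1 k)
      have h1 : (1:ℝ) = 0 := hp.2.unique (by rw [hz]; exact hasSum_zero)
      norm_num at h1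
    refine lt_of_lt_of_le (Real.rpow_pos_of_pos hk α) ?_
    exact Summable.le_tsum (rpow_summable hp hα.le) k (fun i _ => Real.rpow_nonneg (hp.1 i) _)
  have hcont : Tendsto (fun x : ℝ => ENNReal.ofReal ((1 - α)⁻¹ * Real.log x))
      (𝓝 (∑' k, p k ^ α))
      (𝓝 (ENNReal.ofReal ((1 - α)⁻¹ * Real.log (∑' k, p k ^ α)))) :=
    ENNReal.continuous_ofReal.continuousAt.tendsto.comp
      (tendsto_const_nhds.mul (Real.continuousAt_log hSpos.ne').tendsto)
  have hfinal := hcont.comp hStend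
  simp only [renyiEntropy_eq (hP _) hα, renyiEntropy_eq hp hα]
  exact hfinal
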